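/- The T_δ-test returns no false positives: if the test classifies a single-via path P_{svt} as locally optimal, and the test's shortest path queries covered every T-significant subpath of P_{svt} containing v in its interior (each such subpath being contained in some queried subpath confirmed to be a shortest path), then P_{svt} is genuinely T-locally optimal. -/

import Mathlib

open List

variable {V : Type*}

/-- Length (cost) of a path given as a list of vertices, with edge weights `c`. -/
def pLen (c : V → V → ℝ) : List V → ℝ
  | [] => 0
  | [_] => 0
  | a :: b :: rest => c a b + pLen c (b :: rest)

/-- The pInterior of a path: the path with its two endpoints removed. -/
def pInterior (p : List V) : List V := (p.drop 1).dropLast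

/-- A (nonempty) path is a shortest path if its length equals the shortest-path
distance `d` between its endpoints. -/
def IsShortestPath [Inhabited V] (c d : V → V → ℝ) (p : List V) : Prop :=
  p ≠ [] ∧ pLen c p = d p.headI p.getLastI

/-- A path is `T`-locally optimal if every `T`-significant subpath (a nonempty
infix whose pInterior has length `< T`) is a shortest path. -/
def TLocOpt [Inhabited V] (c d : V → V → ℝ) (T : ℝ) (p : List V) : Prop :=
  ∀ q : List V, q ≠ [] → q <:+: p → pLen c (pInterior q) < T → IsShortestPath c d q

lemma headI_append'' [Inhabited V] {l : List V} (l' : List V) (h : l ≠ []) :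
    (l ++ l').headI = l.headI := by
  cases l with
  | nil => simp at h
  | cons a t => rfl

lemma getLastI_append'' [Inhabited V] (l : List V) {l' : List V} (h : l' ≠ []) :
    (l ++ l').getLastI = l'.getLastI := by
  simp [List.getLastI_eq_getLast?, List.getLast?_append_of_ne_nil _ h]

lemma getLastI_concat'' [Inhabited V] (l : List V) (x : V) : (l ++ [x]).getLastI = x := by
  simp [List.getLastI_eq_getLast?]

lemma getLast_eq_getLastI'' [Inhabited V] (p : List V) (h : p ≠ []) :
    p.getLast h = p.getLastI := by
  simp [List.getLastI_eq_getLast?, List.getLast?_eq_getLast h]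

lemma pLen_split (c : V → V → ℝ) (x : V) (r : List V) : ∀ l : List V,
    pLen c (l ++ x :: r) = pLen c (l ++ [x]) + pLen c (x :: r)
  | [] => by simp [pLen]
  | [a] => by simp [pLen]
  | a :: b :: l => by
    have ih := pLen_split c x r (b :: l)
    simp only [List.cons_append, List.append_eq, pLen] at *
    rw [ih]; ring

lemma shortest_infix [Inhabited V] {c d : V → V → ℝ}
    (hlow : ∀ p : List V, p ≠ [] → d p.headI p.getLastI ≤ pLen c p)
    (htri : ∀ a b e : V, d a e ≤ d a b + d b e)
    {R Q : List V} (hR : IsShortestPath c d R) (hQ : Q ≠ []) (h : Q <:+: R) :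
    IsShortestPath c d Q := by
  obtain ⟨ra, rb, hrab⟩ := h
  obtain ⟨qh, qt, rfl⟩ : ∃ a t, Q = a :: t := by
    cases Q with
    | nil => exact absurd rfl hQ
    | cons a t => exact ⟨a, t, rfl⟩
  set ql := (qh :: qt).getLast (by simp) with hql
  have hdl : (qh :: qt).dropLast ++ [ql] = qh :: qt := List.dropLast_append_getLast _
  have e2 : pLen c R = pLen c (ra ++ [qh]) + pLen c ((qh :: qt) ++ rb) := by
    rw [← hrab]
    have := pLen_split c qh (qt ++ rb) ra
    simpa using this
  have e3 : pLen c ((qh :: qt) ++ rb) = pLen c (qh :: qt) + pLen c (ql :: rb) := by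
    have h1 : (qh :: qt) ++ rb = (qh :: qt).dropLast ++ ql :: rb := by
      rw [← hdl]; simp
    rw [h1, pLen_split, hdl]
  have hhead : R.headI = (ra ++ [qh]).headI := by
    rw [← hrab]
    have h1 : ra ++ (qh :: qt) ++ rb = (ra ++ [qh]) ++ (qt ++ rb) := by simp
    rw [h1, headI_append'' _ (by simp)]
  have hlast : R.getLastI = (ql :: rb).getLastI := by
    rw [← hrab]
    have h1 : ra ++ (qh :: qt) ++ rb = (ra ++ (qh :: qt).dropLast) ++ (ql :: rb) := by
      conv_lhs => rw [← hdl]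
      simp
    rw [h1, getLastI_append'' _ (by simp)]
  have hQlast : (qh :: qt).getLastI = ql := by
    rw [← hdl, getLastI_concat'']
  have i1 : d R.headI qh ≤ pLen c (ra ++ [qh]) := by
    have := hlow (ra ++ [qh]) (by simp)
    rwa [getLastI_concat'', ← hhead] at this
  have i2 : d ql R.getLastI ≤ pLen c (ql :: rb) := by
    have := hlow (ql :: rb) (by simp)
    rw [hlast]
    exact this
  have i3 : d qh ql ≤ pLen c (qh :: qt) := by
    have := hlow (qh :: qt) (by simp)
    rwa [hQlast] at this
  have tineq : d R.headI R.getLastI ≤ d R.headI qh + d qh ql + d ql R.getLastI := by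
    have t1 := htri R.headI ql R.getLastI
    have t2 := htri R.headI qh ql
    linarith
  have hR2 := hR.2
  refine ⟨hQ, ?_⟩
  have key : pLen c (qh :: qt) ≤ d qh ql := by linarith
  have : (qh :: qt).headI = qh := rfl
  rw [this, hQlast]
  exact le_antisymm key i3

lemma infix_split (A B Q : List V) (v : V) (hQ : Q ≠ [])
    (h : Q <:+: (A ++ v :: B)) (hv : v ∉ pInterior Q) :
    Q <:+: (A ++ [v]) ∨ Q <:+: (v :: B) := by
  obtain ⟨l, r, hlr⟩ := h
  have hlen : l.length + Q.length + r.length = A.length + 1 + B.length := by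
    have := congrArg List.length hlr
    simp at this
    omega
  by_cases hc1 : l.length + Q.length ≤ A.length + 1
  · left
    have pre1 : (l ++ Q) <+: A ++ v :: B := ⟨r, by simpa [List.append_assoc] using hlr⟩
    have pre2 : (A ++ [v]) <+: A ++ v :: B := ⟨B, by simp⟩
    have hpre : l ++ Q <+: A ++ [v] :=
      List.prefix_of_prefix_length_le pre1 pre2 (by simp; omega)
    exact ((List.suffix_append l Q).isInfix).trans hpre.isInfix
  · by_cases hc2 : A.length ≤ l.length
    · right
      have suf1 : Q ++ r <:+ A ++ v :: B := ⟨l, by simpa [List.append_assoc] using hlr⟩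
      have suf2 : v :: B <:+ A ++ v :: B := ⟨A, rfl⟩
      have hsuf : Q ++ r <:+ v :: B :=
        List.suffix_of_suffix_length_le suf1 suf2 (by simp; omega)
      exact ((List.prefix_append Q r).isInfix).trans hsuf.isInfix
    · exfalso
      push_neg at hc1 hc2
      have hlA : l <+: A := by
        refine List.prefix_of_prefix_length_le ⟨Q ++ r, by simpa [List.append_assoc] using hlr⟩
          ⟨v :: B, rfl⟩ (by omega)
      obtain ⟨A', rfl⟩ := hlA
      have hQr : Q ++ r = A' ++ v :: B := by
        have : l ++ (Q ++ r) = l ++ (A' ++ v :: B) := by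
          simpa [List.append_assoc] using hlr
        exact List.append_cancel_left this
      have hlenA : l.length + A'.length = (l ++ A').length := by simp
      have hAQ : (A' ++ [v]) <+: Q := by
        refine List.prefix_of_prefix_length_le ⟨B, by simpa [List.append_assoc] using hQr.symm⟩
          ⟨r, rfl⟩ (by simp at hc1 hc2 ⊢; omega)
      obtain ⟨Q'', hQ''⟩ := hAQ
      have hQ''ne : Q'' ≠ [] := by
        intro hnil
        rw [hnil, List.append_nil] at hQ''
        have := congrArg List.length hQ''
        simp at this hc1 hc2
        omega
      obtain ⟨a, A'', rfl⟩ : ∃ a t, A' = a :: t := by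
        cases A' with
        | nil => simp at hc2
        | cons a t => exact ⟨a, t, rfl⟩
      apply hv
      rw [← hQ'']
      show v ∈ ((((a :: A'') ++ [v]) ++ Q'').drop 1).dropLast
      have : (((a :: A'') ++ [v]) ++ Q'').drop 1 = A'' ++ v :: Q'' := by simp
      rw [this, List.dropLast_append_of_ne_nil (show v :: Q'' ≠ [] by simp)]
      cases Q'' with
      | nil => exact absurd rfl hQ''ne
      | cons b t => simp

/-- The `T_δ`-test returns no false positives: if every
`T`-significant subpath of the via path `P = P_sv ++ (P_vt).tail` containing
`v` in its pInterior is contained in some queried subpath of `P` confirmed to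
be a shortest path, then `P` is genuinely `T`-locally optimal. -/
theorem stmt12 [Inhabited V] (c d : V → V → ℝ) (hc : ∀ a b, 0 ≤ c a b)
    (hlow : ∀ p : List V, p ≠ [] → d p.headI p.getLastI ≤ pLen c p)
    (htri : ∀ a b e : V, d a e ≤ d a b + d b e)
    (s v t : V) (T : ℝ) (p1 p2 : List V)
    (h1 : IsShortestPath c d p1) (h1h : p1.headI = s) (h1l : p1.getLastI = v)
    (h2 : IsShortestPath c d p2) (h2h : p2.headI = v) (h2l : p2.getLastI = t)
    (P : List V) (hP : P = p1 ++ p2.tail)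
    (hcover : ∀ Q : List V, Q ≠ [] → Q <:+: P → pLen c (pInterior Q) < T →
      v ∈ pInterior Q →
      ∃ R : List V, R ≠ [] ∧ Q <:+: R ∧ R <:+: P ∧ IsShortestPath c d R) :
    TLocOpt c d T P := by
  intro Q hQne hQinf hQT
  by_cases hv : v ∈ pInterior Q
  · obtain ⟨R, hRne, hQR, hRP, hRsp⟩ := hcover Q hQne hQinf hQT hv
    exact shortest_infix hlow htri hRsp hQne hQR
  · have hp1 : p1 = p1.dropLast ++ [v] := by
      conv_lhs => rw [← List.dropLast_append_getLast h1.1]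
      rw [getLast_eq_getLastI'' _ h1.1, h1l]
    have hp2 : p2 = v :: p2.tail := by
      cases p2 with
      | nil => exact absurd rfl h2.1
      | cons a tl => rw [show (a :: tl).headI = a from rfl] at h2h; rw [h2h]; rfl
    have hPeq : P = p1.dropLast ++ v :: p2.tail := by
      rw [hP]; conv_lhs => rw [hp1]
      simp
    have := infix_split p1.dropLast p2.tail Q v hQne (hPeq ▸ hQinf) hv
    rcases this with h | h
    · exact shortest_infix hlow htri h1 hQne (hp1 ▸ h)
    · exact shortest_infix hlow htri h2 hQne (hp2 ▸ h)
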